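/- (Information decomposition of the adversarial loss, Lemma 4.2, second part.) Let K, X, B, Z be nonempty finite types, let p be a pmf on K × X with K-marginal p_K, let f : K → B be a function, and let q be a kernel from X to Z. Define the pmf s on K × X × B × Z by s(k,x,β,z) = p(k,x)·q(z|x) if β = f(k) and 0 otherwise, and let s_{KZ} denote its (K,Z)-marginal. Then the supremum, over all kernels D from Z to K with D(k|z) > 0 whenever s_{KZ}(k,z) > 0, of ∑_{k,z} s_{KZ}(k,z) log D(k|z) is at least −H(p_K), and it equals −H(p_K) if and only if I_s(Z;B) = 0 and I_s(Z;K|B) = 0. -/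

import Mathlib

/-- Mutual information `I_s(Z;B)` between the encoding `Z` and the domain index `B`,
computed from the corresponding marginals of a joint `s` on `K × X × B × Z`. -/
noncomputable def IZB {K X B Z : Type*} [Fintype K] [Fintype X] [Fintype B] [Fintype Z]
    (s : K → X → B → Z → ℝ) : ℝ :=
  ∑ β, ∑ z, (∑ k, ∑ x, s k x β z) *
    Real.log ((∑ k, ∑ x, s k x β z) /
      ((∑ k, ∑ x, ∑ z', s k x β z') * (∑ k, ∑ x, ∑ β', s k x β' z)))

/-- Conditional mutual information `I_s(Z;K|B)`, computed from the corresponding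
marginals of a joint `s` on `K × X × B × Z`. -/
noncomputable def IZKgB {K X B Z : Type*} [Fintype K] [Fintype X] [Fintype B] [Fintype Z]
    (s : K → X → B → Z → ℝ) : ℝ :=
  ∑ k, ∑ β, ∑ z, (∑ x, s k x β z) *
    Real.log (((∑ x, s k x β z) * (∑ k', ∑ x, ∑ z', s k' x β z')) /
      ((∑ k', ∑ x, s k' x β z) * (∑ x, ∑ z', s k x β z')))

lemma gibbs_aux {ι : Type*} [Fintype ι] (u v : ι → ℝ) (hu : ∀ i, 0 ≤ u i)
    (hv : ∀ i, 0 ≤ v i) (hpos : ∀ i, 0 < u i → 0 < v i)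
    (hsum : ∑ i, v i ≤ ∑ i, u i) :
    0 ≤ ∑ i, u i * Real.log (u i / v i) := by
  have h : ∀ i, u i - v i ≤ u i * Real.log (u i / v i) := by
    intro i
    rcases eq_or_lt_of_le (hu i) with h0 | h0
    · simp only [← h0, zero_mul, zero_sub, neg_nonpos]
      exact hv i
    · have hv' := hpos i h0
      have hx : Real.log (v i / u i) ≤ v i / u i - 1 :=
        Real.log_le_sub_one_of_pos (by positivity)
      have hlog : Real.log (u i / v i) = - Real.log (v i / u i) := by
        rw [← Real.log_inv]; congr 1; field_simp
      rw [hlog]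
      have h2 : u i * Real.log (v i / u i) ≤ u i * (v i / u i - 1) :=
        mul_le_mul_of_nonneg_left hx h0.le
      have h3 : u i * (v i / u i - 1) = v i - u i := by field_simp
      nlinarith
  calc (0:ℝ) ≤ ∑ i, u i - ∑ i, v i := by linarith
    _ = ∑ i, (u i - v i) := (Finset.sum_sub_distrib _ _).symm
    _ ≤ ∑ i, u i * Real.log (u i / v i) := Finset.sum_le_sum fun i _ => h i

/-- **Information decomposition of the adversarial loss (Lemma 4.2, second part).**
The supremum of the discriminator log-likelihood is at least `-H(p_K)`, with
equality iff `I_s(Z;B) = 0` and `I_s(Z;K|B) = 0`. -/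
theorem adversarial_loss_global_minimum {K X B Z : Type*}
    [Fintype K] [Fintype X] [Fintype B] [Fintype Z] [DecidableEq B]
    [Nonempty K] [Nonempty X] [Nonempty B] [Nonempty Z]
    (p : K → X → ℝ) (hp0 : ∀ k x, 0 ≤ p k x) (hp1 : ∑ k, ∑ x, p k x = 1)
    (pK : K → ℝ) (hpK : ∀ k, pK k = ∑ x, p k x)
    (f : K → B)
    (q : X → Z → ℝ) (hq0 : ∀ x z, 0 ≤ q x z) (hq1 : ∀ x, ∑ z, q x z = 1)
    (s : K → X → B → Z → ℝ)
    (hs : ∀ k x β z, s k x β z = if β = f k then p k x * q x z else 0)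
    (sKZ : K → Z → ℝ) (hsKZ : ∀ k z, sKZ k z = ∑ x, ∑ β, s k x β z) :
    -(-∑ k, pK k * Real.log (pK k))
      ≤ sSup {v : ℝ | ∃ D : Z → K → ℝ, (∀ z k, 0 ≤ D z k) ∧ (∀ z, ∑ k, D z k = 1) ∧
          (∀ k z, 0 < sKZ k z → 0 < D z k) ∧
          v = ∑ k, ∑ z, sKZ k z * Real.log (D z k)}
    ∧ (sSup {v : ℝ | ∃ D : Z → K → ℝ, (∀ z k, 0 ≤ D z k) ∧ (∀ z, ∑ k, D z k = 1) ∧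
          (∀ k z, 0 < sKZ k z → 0 < D z k) ∧
          v = ∑ k, ∑ z, sKZ k z * Real.log (D z k)}
        = -(-∑ k, pK k * Real.log (pK k))
      ↔ IZB s = 0 ∧ IZKgB s = 0) := by
  classical
  -- basic facts
  have hpK0 : ∀ k, 0 ≤ pK k := fun k => (hpK k) ▸ Finset.sum_nonneg fun x _ => hp0 k x
  have hsa : ∀ k z, sKZ k z = ∑ x, p k x * q x z := by
    intro k z
    rw [hsKZ]
    refine Finset.sum_congr rfl fun x _ => ?_
    simp [hs]
  have ha0 : ∀ k z, 0 ≤ sKZ k z := by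
    intro k z; rw [hsa]
    exact Finset.sum_nonneg fun x _ => mul_nonneg (hp0 k x) (hq0 x z)
  have haK : ∀ k, ∑ z, sKZ k z = pK k := by
    intro k
    rw [hpK]
    simp only [hsa]
    rw [Finset.sum_comm]
    refine Finset.sum_congr rfl fun x _ => ?_
    rw [← Finset.mul_sum, hq1, mul_one]
  have hpKsum : ∑ k, pK k = 1 := by
    rw [← hp1]; exact Finset.sum_congr rfl fun k _ => hpK k
  have hasum : ∑ k, ∑ z, sKZ k z = 1 := by
    rw [← hpKsum]; exact Finset.sum_congr rfl fun k _ => haK k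
  have haZ0 : ∀ z, 0 ≤ ∑ j, sKZ j z := fun z => Finset.sum_nonneg fun j _ => ha0 j z
  have haZsum : ∑ z, ∑ j, sKZ j z = 1 := by rw [Finset.sum_comm]; exact hasum
  have hale_aZ : ∀ k z, sKZ k z ≤ ∑ j, sKZ j z := fun k z =>
    Finset.single_le_sum (fun j _ => ha0 j z) (Finset.mem_univ k)
  have hale_pK : ∀ k z, sKZ k z ≤ pK k := fun k z => (haK k) ▸
    Finset.single_le_sum (fun z' _ => ha0 k z') (Finset.mem_univ z)
  have hb0 : ∀ β z, 0 ≤ ∑ j, if β = f j then sKZ j z else 0 := by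
    intro β z
    refine Finset.sum_nonneg fun j _ => ?_
    split_ifs
    exacts [ha0 j z, le_rfl]
  have hale_b : ∀ k z, sKZ k z ≤ ∑ j, if f k = f j then sKZ j z else 0 := by
    intro k z
    have := Finset.single_le_sum (f := fun j => if f k = f j then sKZ j z else 0)
      (fun j _ => by by_cases h : f k = f j <;> simp [h, ha0 j z]) (Finset.mem_univ k)
    simpa using this
  have hpB0 : ∀ β, 0 ≤ ∑ j, if β = f j then pK j else 0 := by
    intro β
    refine Finset.sum_nonneg fun j _ => ?_
    split_ifs
    exacts [hpK0 j, le_rfl]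
  have hpKle_pB : ∀ k, pK k ≤ ∑ j, if f k = f j then pK j else 0 := by
    intro k
    have := Finset.single_le_sum (f := fun j => if f k = f j then pK j else 0)
      (fun j _ => by by_cases h : f k = f j <;> simp [h, hpK0 j]) (Finset.mem_univ k)
    simpa using this
  have hbZ : ∀ z, (∑ β, ∑ j, if β = f j then sKZ j z else 0) = ∑ j, sKZ j z := by
    intro z
    rw [Finset.sum_comm]
    refine Finset.sum_congr rfl fun j _ => ?_
    simp
  have hbsumz : ∀ β, (∑ z, ∑ j, if β = f j then sKZ j z else 0)
      = ∑ j, if β = f j then pK j else 0 := by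
    intro β
    rw [Finset.sum_comm]
    refine Finset.sum_congr rfl fun j _ => ?_
    by_cases h : β = f j <;> simp [h, haK j]
  have hble_pB : ∀ β z, (∑ j, if β = f j then sKZ j z else 0)
      ≤ ∑ j, if β = f j then pK j else 0 := by
    intro β z
    refine Finset.sum_le_sum fun j _ => ?_
    split_ifs
    exacts [hale_pK j z, le_rfl]
  have hble_aZ : ∀ β z, (∑ j, if β = f j then sKZ j z else 0) ≤ ∑ j, sKZ j z := by
    intro β z
    refine Finset.sum_le_sum fun j _ => ?_
    split_ifs
    exacts [le_rfl, ha0 j z]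
  have hpBsum : (∑ β, ∑ j, if β = f j then pK j else 0) = 1 := by
    rw [Finset.sum_comm]
    rw [← hpKsum]
    refine Finset.sum_congr rfl fun j _ => ?_
    simp
  -- marginals of s
  have m4 : ∀ k β z, ∑ x, s k x β z = if β = f k then sKZ k z else 0 := by
    intro k β z
    simp only [hs]
    by_cases h : β = f k <;> simp [h, hsa]
  have m5 : ∀ k β, ∑ x, ∑ z', s k x β z' = if β = f k then pK k else 0 := by
    intro k β
    simp only [hs]
    by_cases h : β = f k <;> simp [h, ← Finset.mul_sum, hq1, (hpK k).symm]
  have m1 : ∀ β z, ∑ k, ∑ x, s k x β z = ∑ j, if β = f j then sKZ j z else 0 :=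
    fun β z => Finset.sum_congr rfl fun k _ => m4 k β z
  have m2 : ∀ β, ∑ k, ∑ x, ∑ z', s k x β z' = ∑ j, if β = f j then pK j else 0 :=
    fun β => Finset.sum_congr rfl fun k _ => m5 k β
  have m3 : ∀ k z, ∑ x, ∑ β', s k x β' z = sKZ k z := fun k z => (hsKZ k z).symm
  have m3' : ∀ z, ∑ k, ∑ x, ∑ β', s k x β' z = ∑ j, sKZ j z :=
    fun z => Finset.sum_congr rfl fun k _ => m3 k z
  -- rewriting the mutual informations
  have hIZB : IZB s = ∑ β, ∑ z, (∑ j, if β = f j then sKZ j z else 0) *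
      Real.log ((∑ j, if β = f j then sKZ j z else 0) /
        ((∑ j, if β = f j then pK j else 0) * ∑ j, sKZ j z)) := by
    unfold IZB
    refine Finset.sum_congr rfl fun β _ => Finset.sum_congr rfl fun z _ => ?_
    rw [m1, m2, m3']
  have hIZKgB : IZKgB s = ∑ k, ∑ z, sKZ k z *
      Real.log (sKZ k z * (∑ j, if f k = f j then pK j else 0) /
        ((∑ j, if f k = f j then sKZ j z else 0) * pK k)) := by
    unfold IZKgB
    refine Finset.sum_congr rfl fun k _ => ?_
    have step : ∀ β, ∑ z, (∑ x, s k x β z) *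
        Real.log (((∑ x, s k x β z) * (∑ k', ∑ x, ∑ z', s k' x β z')) /
          ((∑ k', ∑ x, s k' x β z) * ∑ x, ∑ z', s k x β z'))
        = if β = f k then ∑ z, sKZ k z *
            Real.log (sKZ k z * (∑ j, if β = f j then pK j else 0) /
              ((∑ j, if β = f j then sKZ j z else 0) * pK k)) else 0 := by
      intro β
      by_cases h : β = f k
      · rw [if_pos h]
        refine Finset.sum_congr rfl fun z _ => ?_
        rw [m4, m5, m1, m2, if_pos h, if_pos h]
      · rw [if_neg h]
        refine Finset.sum_eq_zero fun z _ => ?_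
        rw [m4, if_neg h, zero_mul]
    rw [Finset.sum_congr rfl fun β _ => step β]
    simp
  -- value of the supremum
  have hsup : sSup {v : ℝ | ∃ D : Z → K → ℝ, (∀ z k, 0 ≤ D z k) ∧ (∀ z, ∑ k, D z k = 1) ∧
        (∀ k z, 0 < sKZ k z → 0 < D z k) ∧
        v = ∑ k, ∑ z, sKZ k z * Real.log (D z k)}
      = ∑ k, ∑ z, sKZ k z * Real.log (sKZ k z / ∑ j, sKZ j z) := by
    apply IsGreatest.csSup_eq
    constructor
    · refine ⟨fun z k => if (∑ j, sKZ j z) = 0 then (Fintype.card K : ℝ)⁻¹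
        else sKZ k z / ∑ j, sKZ j z, ?_, ?_, ?_, ?_⟩
      · intro z k
        dsimp only
        split_ifs with h
        · positivity
        · exact div_nonneg (ha0 k z) (haZ0 z)
      · intro z
        dsimp only
        by_cases h : (∑ j, sKZ j z) = 0
        · simp only [if_pos h]
          rw [Finset.sum_const, Finset.card_univ, nsmul_eq_mul]
          have hc : (Fintype.card K : ℝ) ≠ 0 := Nat.cast_ne_zero.mpr Fintype.card_ne_zero
          field_simp
        · simp only [if_neg h]
          rw [← Finset.sum_div, div_self h]
      · intro k z hk
        dsimp only
        have hZ : 0 < ∑ j, sKZ j z := lt_of_lt_of_le hk (hale_aZ k z)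
        rw [if_neg hZ.ne']
        exact div_pos hk hZ
      · refine Finset.sum_congr rfl fun k _ => Finset.sum_congr rfl fun z _ => ?_
        dsimp only
        by_cases h : (∑ j, sKZ j z) = 0
        · have h0 : sKZ k z = 0 := le_antisymm (h ▸ hale_aZ k z) (ha0 k z)
          simp [h0]
        · rw [if_neg h]
    · rintro v ⟨D, hD0, hD1, hDpos, rfl⟩
      have key : 0 ≤ ∑ k, ∑ z, sKZ k z * Real.log (sKZ k z / (D z k * ∑ j, sKZ j z)) := by
        have h := gibbs_aux (ι := K × Z) (fun i => sKZ i.1 i.2)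
          (fun i => D i.2 i.1 * ∑ j, sKZ j i.2)
          (fun i => ha0 i.1 i.2)
          (fun i => mul_nonneg (hD0 i.2 i.1) (haZ0 i.2))
          (fun i hi => mul_pos (hDpos i.1 i.2 hi) (lt_of_lt_of_le hi (hale_aZ i.1 i.2)))
          (by
            simp only [Fintype.sum_prod_type]
            rw [hasum]
            refine le_of_eq ?_
            calc ∑ k, ∑ z, D z k * ∑ j, sKZ j z
                = ∑ z, ∑ k, D z k * ∑ j, sKZ j z := Finset.sum_comm
              _ = ∑ z, (∑ k, D z k) * ∑ j, sKZ j z := by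
                  exact Finset.sum_congr rfl fun z _ => (Finset.sum_mul _ _ _).symm
              _ = ∑ z, ∑ j, sKZ j z := by
                  refine Finset.sum_congr rfl fun z _ => ?_
                  rw [hD1 z, one_mul]
              _ = 1 := haZsum)
        simpa [Fintype.sum_prod_type] using h
      have pointwise : ∀ k z, sKZ k z * Real.log (sKZ k z / (D z k * ∑ j, sKZ j z))
          = sKZ k z * Real.log (sKZ k z / ∑ j, sKZ j z) - sKZ k z * Real.log (D z k) := by
        intro k z
        rcases eq_or_lt_of_le (ha0 k z) with h0 | h0
        · simp [← h0]
        · have hZ : 0 < ∑ j, sKZ j z := lt_of_lt_of_le h0 (hale_aZ k z)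
          have hD : 0 < D z k := hDpos k z h0
          rw [← mul_sub]
          congr 1
          rw [← Real.log_div (by positivity) hD.ne']
          congr 1
          ring
      have hsplit : (∑ k, ∑ z, sKZ k z * Real.log (sKZ k z / (D z k * ∑ j, sKZ j z)))
          = (∑ k, ∑ z, sKZ k z * Real.log (sKZ k z / ∑ j, sKZ j z))
            - ∑ k, ∑ z, sKZ k z * Real.log (D z k) := by
        rw [← Finset.sum_sub_distrib]
        refine Finset.sum_congr rfl fun k _ => ?_
        rw [← Finset.sum_sub_distrib]
        exact Finset.sum_congr rfl fun z _ => pointwise k z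
      linarith [key, hsplit]
  -- entropy decomposition  L = H + I
  have hL_decomp : (∑ k, ∑ z, sKZ k z * Real.log (sKZ k z / ∑ j, sKZ j z))
      = (∑ k, pK k * Real.log (pK k))
        + ∑ k, ∑ z, sKZ k z * Real.log (sKZ k z / (pK k * ∑ j, sKZ j z)) := by
    rw [← Finset.sum_add_distrib]
    refine Finset.sum_congr rfl fun k _ => ?_
    have hH : pK k * Real.log (pK k) = ∑ z, sKZ k z * Real.log (pK k) := by
      rw [← Finset.sum_mul, haK k]
    rw [hH, ← Finset.sum_add_distrib]
    refine Finset.sum_congr rfl fun z _ => ?_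
    rcases eq_or_lt_of_le (ha0 k z) with h0 | h0
    · simp [← h0]
    · have hP : 0 < pK k := lt_of_lt_of_le h0 (hale_pK k z)
      have hZ : 0 < ∑ j, sKZ j z := lt_of_lt_of_le h0 (hale_aZ k z)
      rw [← mul_add]
      congr 1
      rw [← Real.log_mul hP.ne' (by positivity)]
      congr 1
      field_simp
  -- I ≥ 0
  have hI0 : 0 ≤ ∑ k, ∑ z, sKZ k z * Real.log (sKZ k z / (pK k * ∑ j, sKZ j z)) := by
    have h := gibbs_aux (ι := K × Z) (fun i => sKZ i.1 i.2)
      (fun i => pK i.1 * ∑ j, sKZ j i.2)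
      (fun i => ha0 i.1 i.2)
      (fun i => mul_nonneg (hpK0 i.1) (haZ0 i.2))
      (fun i hi => mul_pos (lt_of_lt_of_le hi (hale_pK i.1 i.2))
        (lt_of_lt_of_le hi (hale_aZ i.1 i.2)))
      (by
        simp only [Fintype.sum_prod_type]
        rw [hasum]
        refine le_of_eq ?_
        calc ∑ k, ∑ z, pK k * ∑ j, sKZ j z
            = ∑ k, pK k * ∑ z, ∑ j, sKZ j z := by
              exact Finset.sum_congr rfl fun k _ => (Finset.mul_sum _ _ _).symm
          _ = 1 := by rw [haZsum]; simp [hpKsum])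
    simpa [Fintype.sum_prod_type] using h
  -- I(Z;B) ≥ 0
  have hIZB0 : 0 ≤ ∑ β, ∑ z, (∑ j, if β = f j then sKZ j z else 0) *
      Real.log ((∑ j, if β = f j then sKZ j z else 0) /
        ((∑ j, if β = f j then pK j else 0) * ∑ j, sKZ j z)) := by
    have h := gibbs_aux (ι := B × Z) (fun i => ∑ j, if i.1 = f j then sKZ j i.2 else 0)
      (fun i => (∑ j, if i.1 = f j then pK j else 0) * ∑ j, sKZ j i.2)
      (fun i => hb0 i.1 i.2)
      (fun i => mul_nonneg (hpB0 i.1) (haZ0 i.2))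
      (fun i hi => mul_pos (lt_of_lt_of_le hi (hble_pB i.1 i.2))
        (lt_of_lt_of_le hi (hble_aZ i.1 i.2)))
      (by
        simp only [Fintype.sum_prod_type]
        have h1 : (∑ β, ∑ z, (∑ j, if β = f j then sKZ j z else 0)) = 1 := by
          rw [← hpBsum]; exact Finset.sum_congr rfl fun β _ => hbsumz β
        rw [h1]
        refine le_of_eq ?_
        calc (∑ β, ∑ z, (∑ j, if β = f j then pK j else 0) * ∑ j, sKZ j z)
            = ∑ β, (∑ j, if β = f j then pK j else 0) * ∑ z, ∑ j, sKZ j z := by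
              exact Finset.sum_congr rfl fun β _ => (Finset.mul_sum _ _ _).symm
          _ = 1 := by rw [haZsum]; simp [hpBsum])
    simpa [Fintype.sum_prod_type] using h
  -- I(Z;K|B) ≥ 0
  have hIZKgB0 : 0 ≤ ∑ k, ∑ z, sKZ k z *
      Real.log (sKZ k z * (∑ j, if f k = f j then pK j else 0) /
        ((∑ j, if f k = f j then sKZ j z else 0) * pK k)) := by
    have h := gibbs_aux (ι := K × Z) (fun i => sKZ i.1 i.2)
      (fun i => (∑ j, if f i.1 = f j then sKZ j i.2 else 0) * pK i.1 /
        (∑ j, if f i.1 = f j then pK j else 0))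
      (fun i => ha0 i.1 i.2)
      (fun i => div_nonneg (mul_nonneg (hb0 _ _) (hpK0 _)) (hpB0 _))
      (fun i hi => by
        have h1 : 0 < ∑ j, if f i.1 = f j then sKZ j i.2 else 0 :=
          lt_of_lt_of_le hi (hale_b i.1 i.2)
        have h2 : 0 < pK i.1 := lt_of_lt_of_le hi (hale_pK i.1 i.2)
        have h3 : 0 < ∑ j, if f i.1 = f j then pK j else 0 :=
          lt_of_lt_of_le h2 (hpKle_pB i.1)
        positivity)
      (by
        simp only [Fintype.sum_prod_type]
        rw [hasum]
        have hrow : ∀ kk : K, (∑ z, (∑ j, if f kk = f j then sKZ j z else 0) * pK kk /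
            (∑ j, if f kk = f j then pK j else 0)) ≤ pK kk := by
          intro kk
          have hr : (∑ z, (∑ j, if f kk = f j then sKZ j z else 0) * pK kk /
              (∑ j, if f kk = f j then pK j else 0))
              = (∑ j, if f kk = f j then pK j else 0) * pK kk /
                (∑ j, if f kk = f j then pK j else 0) := by
            rw [← Finset.sum_div, ← Finset.sum_mul, hbsumz (f kk)]
          rw [hr]
          rcases eq_or_lt_of_le (hpB0 (f kk)) with h0 | h0
          · rw [← h0]
            simp [hpK0 kk]
          · rw [mul_comm, mul_div_assoc, div_self h0.ne', mul_one]
        calc (∑ kk, ∑ z, (∑ j, if f kk = f j then sKZ j z else 0) * pK kk /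
              (∑ j, if f kk = f j then pK j else 0))
            ≤ ∑ kk, pK kk := Finset.sum_le_sum fun kk _ => hrow kk
          _ = 1 := hpKsum)
    have hpt : ∀ i : K × Z, sKZ i.1 i.2 * Real.log (sKZ i.1 i.2 /
        ((∑ j, if f i.1 = f j then sKZ j i.2 else 0) * pK i.1 /
          (∑ j, if f i.1 = f j then pK j else 0)))
        = sKZ i.1 i.2 * Real.log (sKZ i.1 i.2 * (∑ j, if f i.1 = f j then pK j else 0) /
          ((∑ j, if f i.1 = f j then sKZ j i.2 else 0) * pK i.1)) := by
      intro i
      congr 1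
      rw [div_div_eq_mul_div]
    simp only [hpt] at h
    simpa [Fintype.sum_prod_type] using h
  -- regroup I(Z;B) as a sum over (k,z)
  have hJ : (∑ β, ∑ z, (∑ j, if β = f j then sKZ j z else 0) *
      Real.log ((∑ j, if β = f j then sKZ j z else 0) /
        ((∑ j, if β = f j then pK j else 0) * ∑ j, sKZ j z)))
      = ∑ k, ∑ z, sKZ k z *
        Real.log ((∑ j, if f k = f j then sKZ j z else 0) /
          ((∑ j, if f k = f j then pK j else 0) * ∑ j, sKZ j z)) := by
    have step1 : ∀ β z, (∑ j, if β = f j then sKZ j z else 0) *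
        Real.log ((∑ j, if β = f j then sKZ j z else 0) /
          ((∑ j, if β = f j then pK j else 0) * ∑ j, sKZ j z))
        = ∑ j, if β = f j then sKZ j z *
            Real.log ((∑ j', if β = f j' then sKZ j' z else 0) /
              ((∑ j', if β = f j' then pK j' else 0) * ∑ j', sKZ j' z)) else 0 := by
      intro β z
      rw [Finset.sum_mul]
      refine Finset.sum_congr rfl fun j _ => ?_
      split_ifs <;> simp
    rw [Finset.sum_congr rfl fun β _ => Finset.sum_congr rfl fun z _ => step1 β z]
    rw [Finset.sum_comm]
    rw [Finset.sum_congr rfl fun z (_ : z ∈ Finset.univ) => Finset.sum_comm]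
    rw [Finset.sum_comm]
    refine Finset.sum_congr rfl fun j _ => Finset.sum_congr rfl fun z _ => ?_
    simp
  -- termwise chain rule
  have hsplit2 : ∀ k z, sKZ k z * Real.log (sKZ k z / (pK k * ∑ j, sKZ j z))
      = sKZ k z * Real.log (sKZ k z * (∑ j, if f k = f j then pK j else 0) /
          ((∑ j, if f k = f j then sKZ j z else 0) * pK k))
        + sKZ k z * Real.log ((∑ j, if f k = f j then sKZ j z else 0) /
          ((∑ j, if f k = f j then pK j else 0) * ∑ j, sKZ j z)) := by
    intro k z
    rcases eq_or_lt_of_le (ha0 k z) with h0 | h0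
    · simp [← h0]
    · have h1 : 0 < ∑ j, if f k = f j then sKZ j z else 0 := lt_of_lt_of_le h0 (hale_b k z)
      have h2 : 0 < pK k := lt_of_lt_of_le h0 (hale_pK k z)
      have h3 : 0 < ∑ j, if f k = f j then pK j else 0 := lt_of_lt_of_le h2 (hpKle_pB k)
      have h4 : 0 < ∑ j, sKZ j z := lt_of_lt_of_le h0 (hale_aZ k z)
      rw [← mul_add]
      congr 1
      rw [← Real.log_mul (by positivity) (by positivity)]
      congr 1
      field_simp
  have hIdecomp : (∑ k, ∑ z, sKZ k z * Real.log (sKZ k z / (pK k * ∑ j, sKZ j z)))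
      = (∑ k, ∑ z, sKZ k z * Real.log (sKZ k z * (∑ j, if f k = f j then pK j else 0) /
          ((∑ j, if f k = f j then sKZ j z else 0) * pK k)))
        + ∑ k, ∑ z, sKZ k z * Real.log ((∑ j, if f k = f j then sKZ j z else 0) /
          ((∑ j, if f k = f j then pK j else 0) * ∑ j, sKZ j z)) := by
    rw [← Finset.sum_add_distrib]
    refine Finset.sum_congr rfl fun k _ => ?_
    rw [← Finset.sum_add_distrib]
    exact Finset.sum_congr rfl fun z _ => hsplit2 k z
  -- conclusion
  have hJ0 : 0 ≤ ∑ k, ∑ z, sKZ k z *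
      Real.log ((∑ j, if f k = f j then sKZ j z else 0) /
        ((∑ j, if f k = f j then pK j else 0) * ∑ j, sKZ j z)) := hJ ▸ hIZB0
  simp only [neg_neg]
  rw [hsup, hIZB, hJ, hIZKgB]
  refine ⟨by linarith, ?_, ?_⟩
  · intro h
    have hIz : (∑ k, ∑ z, sKZ k z * Real.log (sKZ k z / (pK k * ∑ j, sKZ j z))) = 0 := by
      linarith
    constructor <;> linarith
  · rintro ⟨h1, h2⟩
    linarith
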